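/- Let K be a group and let N_1, N_2, …, N_n be pairwise distinct normal subgroups of K such that each quotient K/N_i is a non-abelian simple group. Then K/N_1 is isomorphic as a group to the quotient (N_2 ∩ N_3 ∩ ⋯ ∩ N_n) / (N_1 ∩ N_2 ∩ ⋯ ∩ N_n), i.e., the quotient of the intersection of N_2, …, N_n by the intersection of all of N_1, …, N_n (note that the latter is a normal subgroup of K contained in the former). -/

import Mathlib

private lemma my_ne_top {K : Type*} [Group K] {M : Subgroup K} [M.Normal]
    (hs : IsSimpleGroup (K ⧸ M)) : M ≠ ⊤ := by
  intro h
  haveI : Subsingleton (K ⧸ M) := by rw [h]; exact QuotientGroup.subsingleton_quotient_top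
  haveI := hs.toNontrivial
  exact false_of_nontrivial_of_subsingleton (K ⧸ M)

private lemma my_sup_top {K : Type*} [Group K] {A M : Subgroup K} [M.Normal]
    (hAn : A.Normal) (hs : IsSimpleGroup (K ⧸ M)) (h : ¬ A ≤ M) : A ⊔ M = ⊤ := by
  rcases hs.eq_bot_or_eq_top_of_normal (A.map (QuotientGroup.mk' M))
      (hAn.map _ (QuotientGroup.mk'_surjective M)) with hb | ht
  · rw [Subgroup.map_eq_bot_iff, QuotientGroup.ker_mk'] at hb
    exact absurd hb h
  · have h2 := Subgroup.comap_map_eq (f := QuotientGroup.mk' M) A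
    rw [ht, Subgroup.comap_top, QuotientGroup.ker_mk'] at h2
    exact h2.symm

private lemma my_exists_mk {K : Type*} [Group K] {A M : Subgroup K} [M.Normal]
    (h : A ⊔ M = ⊤) (a : K ⧸ M) : ∃ x ∈ A, QuotientGroup.mk x = a := by
  obtain ⟨g, rfl⟩ := QuotientGroup.mk_surjective a
  have hg : g ∈ A ⊔ M := h ▸ Subgroup.mem_top g
  rw [← SetLike.mem_coe, Subgroup.mul_normal A M, Set.mem_mul] at hg
  obtain ⟨x, hx, m, hm, rfl⟩ := hg
  refine ⟨x, hx, ?_⟩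
  show (QuotientGroup.mk x : K ⧸ M) = QuotientGroup.mk (x * m)
  rw [QuotientGroup.mk_mul, (QuotientGroup.eq_one_iff m).mpr hm, mul_one]

private lemma my_finsetInf_normal {K : Type*} [Group K] {ι : Type*} (N : ι → Subgroup K)
    (hnormal : ∀ i, (N i).Normal) (s : Finset ι) : (s.inf N).Normal := by
  constructor
  intro x hx g
  simp only [Finset.inf_eq_iInf, Subgroup.mem_iInf] at hx ⊢
  exact fun i hi => (hnormal i).conj_mem x (hx i hi) g

private lemma my_key {K : Type*} [Group K] {ι : Type*} (N : ι → Subgroup K)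
    (hnormal : ∀ i, (N i).Normal) (hdist : Function.Injective N)
    (hsimple : ∀ i, IsSimpleGroup (K ⧸ N i))
    (hna : ∀ i, ∃ a b : K ⧸ N i, a * b ≠ b * a)
    (s : Finset ι) : ∀ j ∉ s, ¬ s.inf N ≤ N j := by
  classical
  induction s using Finset.induction_on with
  | empty =>
    intro j _ h
    rw [Finset.inf_empty, top_le_iff] at h
    haveI := hnormal j
    exact my_ne_top (hsimple j) h
  | @insert i s hi IH =>
    intro j hj hle
    haveI := hnormal i
    haveI := hnormal j
    rw [Finset.inf_insert] at hle
    have hjs : j ∉ s := fun h => hj (Finset.mem_insert_of_mem h)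
    have hij : i ≠ j := fun h => hj (by rw [← h]; exact Finset.mem_insert_self i s)
    haveI hMn : (s.inf N).Normal := my_finsetInf_normal N hnormal s
    -- N i is not contained in N j
    have hNij : ¬ N i ≤ N j := by
      intro hle'
      rcases (hsimple i).eq_bot_or_eq_top_of_normal ((N j).map (QuotientGroup.mk' (N i)))
          ((hnormal j).map _ (QuotientGroup.mk'_surjective _)) with hb | ht
      · rw [Subgroup.map_eq_bot_iff, QuotientGroup.ker_mk'] at hb
        exact hij (hdist (le_antisymm hle' hb))
      · have h2 := Subgroup.comap_map_eq (f := QuotientGroup.mk' (N i)) (N j)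
        rw [ht, Subgroup.comap_top, QuotientGroup.ker_mk'] at h2
        exact my_ne_top (hsimple j) (top_le_iff.mp (h2.le.trans (sup_le le_rfl hle')))
    have hMj : ¬ s.inf N ≤ N j := IH j hjs
    have hsup1 : N i ⊔ N j = ⊤ := my_sup_top (hnormal i) (hsimple j) hNij
    have hsup2 : s.inf N ⊔ N j = ⊤ := my_sup_top hMn (hsimple j) hMj
    have hcomm : ⁅s.inf N, N i⁆ ≤ N j :=
      (Subgroup.commutator_le_inf (s.inf N) (N i)).trans ((inf_comm (s.inf N) (N i)).le.trans hle)
    obtain ⟨a, b, hab⟩ := hna j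
    apply hab
    obtain ⟨x, hx, rfl⟩ := my_exists_mk hsup1 a
    obtain ⟨y, hy, rfl⟩ := my_exists_mk hsup2 b
    show QuotientGroup.mk (x * y) = QuotientGroup.mk (y * x)
    rw [QuotientGroup.eq]
    open scoped commutatorElement in
    have hmem : ⁅y⁻¹, x⁻¹⁆ ∈ N j :=
      hcomm (Subgroup.commutator_mem_commutator (inv_mem hy) (inv_mem hx))
    open scoped commutatorElement in
    have : (x * y)⁻¹ * (y * x) = ⁅y⁻¹, x⁻¹⁆ := by group
    rw [this]; exact hmem

theorem stmt_3 {K : Type*} [Group K] {n : ℕ} (hn : 1 ≤ n)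
    (N : Fin n → Subgroup K) (hnormal : ∀ i, (N i).Normal)
    (hdist : Function.Injective N)
    (hsimple : ∀ i, IsSimpleGroup (K ⧸ N i))
    (hna : ∀ i, ∃ a b : K ⧸ N i, a * b ≠ b * a) :
    haveI : (⨅ i, N i).Normal :=
      ⟨fun x hx g => by
        simp only [Subgroup.mem_iInf] at hx ⊢
        exact fun i => (hnormal i).conj_mem x (hx i) g⟩
    Nonempty ((K ⧸ N ⟨0, hn⟩) ≃*
      (↥(⨅ i : {i : Fin n // i ≠ ⟨0, hn⟩}, N i.1) ⧸
        (⨅ i, N i).subgroupOf (⨅ i : {i : Fin n // i ≠ ⟨0, hn⟩}, N i.1))) := by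
  set z : Fin n := ⟨0, hn⟩ with hz
  set M : Subgroup K := ⨅ i : {i : Fin n // i ≠ z}, N i.1 with hMdef
  haveI := hnormal z
  have hM : M = (Finset.univ.erase z).inf N := by
    rw [hMdef, Finset.inf_eq_iInf]
    ext x
    simp [Subgroup.mem_iInf, Finset.mem_erase]
  haveI hMn : M.Normal := hM ▸ my_finsetInf_normal N hnormal _
  have hMz : ¬ M ≤ N z := by
    rw [hM]
    exact my_key N hnormal hdist hsimple hna _ z (Finset.notMem_erase z _)
  have hsup : M ⊔ N z = ⊤ := my_sup_top hMn (hsimple z) hMz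
  have hInf : (⨅ i, N i) = N z ⊓ M := by
    apply le_antisymm
    · exact le_inf (iInf_le _ z) (le_iInf fun i => iInf_le _ i.1)
    · refine le_iInf fun i => ?_
      by_cases h : i = z
      · subst h; exact inf_le_left
      · exact inf_le_right.trans ((iInf_le _ (⟨i, h⟩ : {i : Fin n // i ≠ z})).trans le_rfl)
  have hIeq : (⨅ i, N i).subgroupOf M = (N z).subgroupOf M := by
    rw [hInf, Subgroup.inf_subgroupOf_right]
  have e1 := QuotientGroup.quotientInfEquivProdNormalQuotient M (N z)
  haveI hInfN : (⨅ i, N i).Normal := by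
    constructor
    intro x hx g
    simp only [Subgroup.mem_iInf] at hx ⊢
    exact fun i => (hnormal i).conj_mem x (hx i) g
  let e0 : ↥(M ⊔ N z) ≃* K :=
    MulEquiv.ofBijective (M ⊔ N z).subtype
      ⟨Subgroup.subtype_injective _, fun g => ⟨⟨g, by rw [hsup]; trivial⟩, rfl⟩⟩
  have hmono : e0.toMonoidHom = (M ⊔ N z).subtype := rfl
  have hmap : ((N z).subgroupOf (M ⊔ N z)).map e0.toMonoidHom = N z := by
    rw [hmono, Subgroup.subgroupOf_map_subtype]
    exact inf_eq_left.mpr le_sup_right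
  have e2 := QuotientGroup.congr ((N z).subgroupOf (M ⊔ N z)) (N z) e0 hmap
  have e3 : (↥M ⧸ (N z).subgroupOf M) ≃* (↥M ⧸ (⨅ i, N i).subgroupOf M) :=
    QuotientGroup.quotientMulEquivOfEq hIeq.symm
  exact ⟨((e1.trans e2).symm).trans e3⟩
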